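/- For all α ∈ (0,1] and probability mass functions W, Q on a finite set Y, the Pinsker-type inequality D_α(W‖Q) ≥ (α/2)·‖W − Q‖₁² holds, where ‖W − Q‖₁ = ∑_y |W(y) − Q(y)| is the total variation distance. -/

import Mathlib

open Real MeasureTheory Filter

def IsPMF {Y : Type*} [Fintype Y] (W : Y → ℝ) : Prop :=
  (∀ y, 0 ≤ W y) ∧ ∑ y, W y = 1

noncomputable def renyiDiv {Y : Type*} [Fintype Y] (α : ℝ) (W Q : Y → ℝ) : ℝ :=
  if α = 1 then ∑ y, W y * Real.log (W y / Q y)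
  else (α - 1)⁻¹ * Real.log (∑ y, W y ^ α * Q y ^ (1 - α))

open Classical in
/-- Extended-real-valued order-`α` Rényi divergence, taking the value `⊤` when the
divergence is infinite. -/
noncomputable def renyiDivE {Y : Type*} [Fintype Y] (α : ℝ) (W Q : Y → ℝ) : ENNReal :=
  if α = 1 then
    (if ∀ y, Q y = 0 → W y = 0 then ENNReal.ofReal (renyiDiv 1 W Q) else ⊤)
  else
    (if 0 < ∑ y, W y ^ α * Q y ^ (1 - α) then ENNReal.ofReal (renyiDiv α W Q) else ⊤)

/-- The order-`α` tilted pmf `W^α_Q`. -/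
noncomputable def tilt {Y : Type*} [Fintype Y] (α : ℝ) (W Q : Y → ℝ) : Y → ℝ :=
  fun y => Real.exp ((1 - α) * renyiDiv α W Q) * W y ^ α * Q y ^ (1 - α)

/-- The order-`α` Rényi information `I_α(P;W)` (mutual information for `α = 1`). -/
noncomputable def renyiInfo {X Y : Type*} [Fintype X] [Fintype Y] (α : ℝ) (P : X → ℝ)
    (W : X → Y → ℝ) : ℝ :=
  if α = 1 then ∑ x, P x * ∑ y, W x y * Real.log (W x y / (∑ x', P x' * W x' y))
  else (α / (α - 1)) * Real.log (∑ y, (∑ x, P x * W x y ^ α) ^ α⁻¹)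

/-- The order-`α` Rényi capacity `C_α(W) = sup_P I_α(P;W)`. -/
noncomputable def renyiCap {X Y : Type*} [Fintype X] [Fintype Y] (α : ℝ) (W : X → Y → ℝ) : ℝ :=
  sSup {c | ∃ P : X → ℝ, IsPMF P ∧ c = renyiInfo α P W}

/-- The sphere packing exponent `E_sp(R,W)`. -/
noncomputable def spe {X Y : Type*} [Fintype X] [Fintype Y] (R : ℝ) (W : X → Y → ℝ) : ℝ :=
  sSup {e | ∃ α ∈ Set.Ioo (0:ℝ) 1, e = ((1 - α) / α) * (renyiCap α W - R)}

/-- The order-`α` Rényi mean `q_{α,P}`. -/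
noncomputable def renyiMean {X Y : Type*} [Fintype X] [Fintype Y] (α : ℝ) (P : X → ℝ)
    (W : X → Y → ℝ) : Y → ℝ :=
  fun y => (∑ x, P x * W x y ^ α) ^ α⁻¹ / ∑ y', (∑ x, P x * W x y' ^ α) ^ α⁻¹

section RenyiPinskerAux

open Real Finset

private noncomputable def Gfun : ℝ → ℝ := fun t => Real.log t - 2*(t-1)/(t+1)

private lemma G_hasDeriv {t : ℝ} (ht : 0 < t) :
    HasDerivAt Gfun ((t-1)^2 / (t*(t+1)^2)) t := by
  have h1 : HasDerivAt (fun t : ℝ => 2*(t-1)) 2 t := by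
    simpa using ((hasDerivAt_id t).sub_const 1).const_mul 2
  have h2 : HasDerivAt (fun t : ℝ => t+1) 1 t := (hasDerivAt_id t).add_const 1
  have hne : t + 1 ≠ 0 := by linarith
  have h3 := (h1.div h2 hne)
  have h4 := (Real.hasDerivAt_log ht.ne').sub h3
  refine h4.congr_deriv ?_
  field_simp
  ring

private lemma G_mono : MonotoneOn Gfun (Set.Ioi (0:ℝ)) := by
  apply monotoneOn_of_deriv_nonneg (convex_Ioi 0)
  · exact fun t ht => (G_hasDeriv ht).differentiableAt.continuousAt.continuousWithinAt
  · intro t ht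
    rw [interior_Ioi] at ht
    exact (G_hasDeriv ht).differentiableAt.differentiableWithinAt
  · intro t ht
    rw [interior_Ioi] at ht
    rw [(G_hasDeriv ht).deriv]
    exact div_nonneg (sq_nonneg _) (mul_nonneg ht.le (sq_nonneg _))

private lemma G_one : Gfun 1 = 0 := by simp [Gfun]

private noncomputable def Ffun : ℝ → ℝ :=
  fun t => t * Real.log t - t + 1 - 3*(t-1)^2/(2*(t+2))

private lemma F_hasDeriv {t : ℝ} (ht : 0 < t) :
    HasDerivAt Ffun (Gfun t + (t-1)^3/(2*(t+1)*(t+2)^2)) t := by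
  have h1 : HasDerivAt (fun t : ℝ => t * Real.log t) (Real.log t + 1) t := by
    have := (hasDerivAt_id t).mul (Real.hasDerivAt_log ht.ne')
    refine this.congr_deriv ?_
    field_simp
    simp only [id]
    ring
  have h2 : HasDerivAt (fun t : ℝ => 3*(t-1)^2) (3*(2*(t-1))) t := by
    simpa using (((hasDerivAt_id t).sub_const 1).pow 2).const_mul 3
  have h3 : HasDerivAt (fun t : ℝ => 2*(t+2)) 2 t := by
    simpa using ((hasDerivAt_id t).add_const 2).const_mul 2
  have hne : 2*(t+2) ≠ 0 := by positivity
  have h4 := ((h1.sub (hasDerivAt_id t)).add_const 1).sub (h2.div h3 hne)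
  refine h4.congr_deriv ?_
  have hne1 : t + 1 ≠ 0 := by linarith
  have hne2 : t + 2 ≠ 0 := by linarith
  simp only [Gfun]
  field_simp
  ring

private lemma F_nonneg {t : ℝ} (ht : 0 < t) : 0 ≤ Ffun t := by
  have hF1 : Ffun 1 = 0 := by norm_num [Ffun]
  rcases le_total 1 t with h | h
  · -- monotone on Ici 1
    have hmono : MonotoneOn Ffun (Set.Ici (1:ℝ)) := by
      apply monotoneOn_of_deriv_nonneg (convex_Ici 1)
      · exact fun x hx => (F_hasDeriv (by linarith [hx.out] : (0:ℝ) < x)).differentiableAt.continuousAt.continuousWithinAt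
      · intro x hx
        rw [interior_Ici] at hx
        exact (F_hasDeriv (by linarith [hx.out] : (0:ℝ) < x)).differentiableAt.differentiableWithinAt
      · intro x hx
        rw [interior_Ici] at hx
        have hx1 : (1:ℝ) < x := hx
        rw [(F_hasDeriv (by linarith : (0:ℝ) < x)).deriv]
        have hG : 0 ≤ Gfun x := by
          have := G_mono (Set.mem_Ioi.2 one_pos) (Set.mem_Ioi.2 (by linarith : (0:ℝ) < x)) hx1.le
          rwa [G_one] at this
        have : 0 ≤ (x-1)^3/(2*(x+1)*(x+2)^2) :=
          div_nonneg (pow_nonneg (by linarith) 3)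
            (mul_nonneg (by linarith) (sq_nonneg _))
        linarith
    have := hmono (Set.mem_Ici.2 le_rfl) (Set.mem_Ici.2 h) h
    linarith [hF1 ▸ this]
  · -- antitone on Ioc 0 1
    have hanti : AntitoneOn Ffun (Set.Ioc (0:ℝ) 1) := by
      apply antitoneOn_of_deriv_nonpos (convex_Ioc 0 1)
      · exact fun x hx => (F_hasDeriv hx.1).differentiableAt.continuousAt.continuousWithinAt
      · intro x hx
        rw [interior_Ioc] at hx
        exact (F_hasDeriv hx.1).differentiableAt.differentiableWithinAt
      · intro x hx
        rw [interior_Ioc] at hx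
        obtain ⟨hx0, hx1⟩ := hx
        rw [(F_hasDeriv hx0).deriv]
        have hG : Gfun x ≤ 0 := by
          have := G_mono (Set.mem_Ioi.2 hx0) (Set.mem_Ioi.2 one_pos) hx1.le
          rwa [G_one] at this
        have hcube : (x-1)^3/(2*(x+1)*(x+2)^2) ≤ 0 := by
          apply div_nonpos_of_nonpos_of_nonneg
          · exact Odd.pow_nonpos (by decide) (by linarith)
          · exact mul_nonneg (by linarith) (sq_nonneg _)
        linarith
    have := hanti (Set.mem_Ioc.2 ⟨ht, h⟩) (Set.mem_Ioc.2 ⟨one_pos, le_rfl⟩) h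
    linarith [hF1 ▸ this]

private lemma key_ineq {t : ℝ} (ht : 0 < t) :
    3*(t-1)^2/(2*(t+2)) ≤ t * Real.log t - t + 1 := by
  have := F_nonneg ht
  simp only [Ffun] at this
  linarith


private lemma pointwise_bound {p q : ℝ} (hp : 0 ≤ p) (hq : 0 ≤ q) (h : q = 0 → p = 0) :
    3*(p-q)^2/(2*(p+2*q)) ≤ p * Real.log (p/q) - p + q := by
  rcases eq_or_lt_of_le hq with hq0 | hq0
  · have hp0 : p = 0 := h hq0.symm
    simp [hp0, ← hq0]
  rcases eq_or_lt_of_le hp with hp0 | hp0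
  · rw [← hp0]
    have : 3*(0-q)^2/(2*(0+2*q)) = (3/4)*q := by field_simp; ring
    rw [this]
    simp only [zero_mul, zero_sub, neg_add_eq_sub, sub_zero]
    linarith
  · have hqne : q ≠ 0 := hq0.ne'
    have ht : 0 < p / q := div_pos hp0 hq0
    have h1 : p * Real.log (p/q) - p + q
        = q * ((p/q) * Real.log (p/q) - p/q + 1) := by
      field_simp
    have h2 : 3*(p-q)^2/(2*(p+2*q)) = q * (3*((p/q)-1)^2/(2*((p/q)+2))) := by
      field_simp
    rw [h1, h2]
    exact mul_le_mul_of_nonneg_left (key_ineq ht) hq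

private lemma pinsker_fin {Y : Type*} [Fintype Y] (R S : Y → ℝ) (hR : (∀ y, 0 ≤ R y) ∧ ∑ y, R y = 1)
    (hS : (∀ y, 0 ≤ S y) ∧ ∑ y, S y = 1) (h : ∀ y, S y = 0 → R y = 0) :
    (∑ y, |R y - S y|)^2 / 2 ≤ ∑ y, R y * Real.log (R y / S y) := by
  have hpt : ∀ y, 3*(R y - S y)^2/(2*(R y + 2*S y)) ≤ R y * Real.log (R y / S y) - R y + S y :=
    fun y => pointwise_bound (hR.1 y) (hS.1 y) (h y)
  have hsum : ∑ y, (R y * Real.log (R y / S y) - R y + S y) = ∑ y, R y * Real.log (R y / S y) := by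
    rw [Finset.sum_add_distrib, Finset.sum_sub_distrib, hR.2, hS.2]
    ring
  have hm3 : ∑ y, (R y + 2*S y) = 3 := by
    rw [Finset.sum_add_distrib, ← Finset.mul_sum, hR.2, hS.2]
    norm_num
  have hcs : (∑ y, |R y - S y|)^2 ≤ 3 * ∑ y, (R y - S y)^2/(R y + 2*S y) := by
    have := Finset.sum_mul_sq_le_sq_mul_sq Finset.univ
      (fun y => Real.sqrt (R y + 2*S y)) (fun y => |R y - S y| / Real.sqrt (R y + 2*S y))
    have e1 : ∀ y : Y, Real.sqrt (R y + 2*S y) * (|R y - S y| / Real.sqrt (R y + 2*S y))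
        = |R y - S y| := by
      intro y
      rcases eq_or_lt_of_le (by have := hR.1 y; have := hS.1 y; linarith : (0:ℝ) ≤ R y + 2*S y) with hm | hm
      · have hr : R y = 0 := by nlinarith [hR.1 y, hS.1 y]
        have hs : S y = 0 := by nlinarith [hR.1 y, hS.1 y]
        simp [hr, hs]
      · rw [mul_div_cancel₀ _ (Real.sqrt_ne_zero'.2 hm)]
    have e2 : ∀ y : Y, (Real.sqrt (R y + 2*S y))^2 = R y + 2*S y :=
      fun y => Real.sq_sqrt (by have := hR.1 y; have := hS.1 y; linarith)
    have e3 : ∀ y : Y, (|R y - S y| / Real.sqrt (R y + 2*S y))^2 = (R y - S y)^2/(R y + 2*S y) := by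
      intro y
      rw [div_pow, sq_abs, Real.sq_sqrt (by have := hR.1 y; have := hS.1 y; linarith)]
    simp only [e1, e2, e3] at this
    rwa [hm3] at this
  have hsum2 : ∑ y, 3*(R y - S y)^2/(2*(R y + 2*S y)) = (3/2) * ∑ y, (R y - S y)^2/(R y + 2*S y) := by
    rw [Finset.mul_sum]
    refine Finset.sum_congr rfl fun y _ => ?_
    rw [div_mul_div_comm]
  calc (∑ y, |R y - S y|)^2 / 2 ≤ (3 * ∑ y, (R y - S y)^2/(R y + 2*S y)) / 2 := by linarith
    _ = ∑ y, 3*(R y - S y)^2/(2*(R y + 2*S y)) := by rw [hsum2]; ring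
    _ ≤ ∑ y, (R y * Real.log (R y / S y) - R y + S y) := Finset.sum_le_sum (fun y _ => hpt y)
    _ = _ := hsum

end RenyiPinskerAux

/-- Pinsker-type inequality for the Rényi divergence. -/
theorem renyiDiv_pinsker {Y : Type*} [Fintype Y] (α : ℝ) (hα : α ∈ Set.Ioc (0:ℝ) 1)
    (W Q : Y → ℝ) (hW : IsPMF W) (hQ : IsPMF Q) (habs : ∀ y, Q y = 0 → W y = 0) :
    renyiDiv α W Q ≥ (α / 2) * (∑ y, |W y - Q y|) ^ 2 := by
  obtain ⟨hα0, hα1⟩ := hα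
  rcases eq_or_lt_of_le hα1 with rfl | hlt
  · -- α = 1 : classical Pinsker
    rw [renyiDiv, if_pos rfl]
    have := pinsker_fin W Q hW hQ habs
    rw [ge_iff_le]
    linarith
  · -- α < 1
    have h1α : (0:ℝ) < 1 - α := by linarith
    set f := ∑ y, W y ^ α * Q y ^ (1 - α) with hf_def
    have hterm : ∀ y : Y, 0 ≤ W y ^ α * Q y ^ (1 - α) :=
      fun y => mul_nonneg (Real.rpow_nonneg (hW.1 y) α) (Real.rpow_nonneg (hQ.1 y) _)
    have hf : 0 < f := by
      have hex : ∃ y, 0 < W y := by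
        by_contra hc
        push_neg at hc
        have : ∑ y, W y = 0 := Finset.sum_eq_zero fun y _ => le_antisymm (hc y) (hW.1 y)
        rw [hW.2] at this; norm_num at this
      obtain ⟨y0, hy0⟩ := hex
      have hq0 : 0 < Q y0 := by
        rcases eq_or_lt_of_le (hQ.1 y0) with hq | hq
        · exact absurd (habs y0 hq.symm) hy0.ne'
        · exact hq
      refine Finset.sum_pos' (fun y _ => hterm y) ⟨y0, Finset.mem_univ y0, ?_⟩
      exact mul_pos (Real.rpow_pos_of_pos hy0 α) (Real.rpow_pos_of_pos hq0 _)
    set R : Y → ℝ := fun y => W y ^ α * Q y ^ (1 - α) / f with hR_def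
    have hR : (∀ y, 0 ≤ R y) ∧ ∑ y, R y = 1 := by
      constructor
      · exact fun y => div_nonneg (hterm y) hf.le
      · rw [← Finset.sum_div, div_self hf.ne']
    have hRW : ∀ y, W y = 0 → R y = 0 := by
      intro y hy
      simp [hR_def, hy, Real.zero_rpow hα0.ne']
    have hRQ : ∀ y, Q y = 0 → R y = 0 := by
      intro y hy
      simp [hR_def, hy, Real.zero_rpow h1α.ne']
    -- key identity
    have hid : α * (∑ y, R y * Real.log (R y / W y)) + (1 - α) * (∑ y, R y * Real.log (R y / Q y))
        = - Real.log f := by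
      rw [Finset.mul_sum, Finset.mul_sum, ← Finset.sum_add_distrib]
      have : ∀ y ∈ Finset.univ, α * (R y * Real.log (R y / W y))
          + (1 - α) * (R y * Real.log (R y / Q y)) = R y * (- Real.log f) := by
        intro y _
        rcases eq_or_lt_of_le (hR.1 y) with hr | hr
        · rw [← hr]; ring
        · have hwne : W y ^ α ≠ 0 := by
            intro hc
            rw [hR_def] at hr
            simp only [hc, zero_mul, zero_div] at hr
            exact lt_irrefl 0 hr
          have hqne : Q y ^ (1-α) ≠ 0 := by
            intro hc
            rw [hR_def] at hr
            simp only [hc, mul_zero, zero_div] at hr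
            exact lt_irrefl 0 hr
          have hw : 0 < W y := by
            rcases eq_or_lt_of_le (hW.1 y) with h | h
            · exact absurd (by rw [← h, Real.zero_rpow hα0.ne'] : W y ^ α = 0) hwne
            · exact h
          have hq : 0 < Q y := by
            rcases eq_or_lt_of_le (hQ.1 y) with h | h
            · exact absurd (by rw [← h, Real.zero_rpow h1α.ne'] : Q y ^ (1-α) = 0) hqne
            · exact h
          have hlogR : Real.log (R y) = α * Real.log (W y) + (1-α) * Real.log (Q y)
              - Real.log f := by
            rw [hR_def]
            rw [Real.log_div (by positivity) hf.ne', Real.log_mul hwne hqne,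
              Real.log_rpow hw, Real.log_rpow hq]
          rw [Real.log_div hr.ne' hw.ne', Real.log_div hr.ne' hq.ne', hlogR]
          ring
      rw [Finset.sum_congr rfl this, ← Finset.sum_mul, hR.2, one_mul]
    -- Pinsker both ways
    have hp1 := pinsker_fin R W hR ⟨hW.1, hW.2⟩ hRW
    have hp2 := pinsker_fin R Q hR ⟨hQ.1, hQ.2⟩ hRQ
    set t := ∑ y, |R y - W y| with ht_def
    set s := ∑ y, |R y - Q y| with hs_def
    set V := ∑ y, |W y - Q y| with hV_def
    have htri : V ≤ t + s := by
      rw [hV_def, ht_def, hs_def, ← Finset.sum_add_distrib]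
      refine Finset.sum_le_sum fun y _ => ?_
      calc |W y - Q y| ≤ |W y - R y| + |R y - Q y| := abs_sub_le _ _ _
        _ = |R y - W y| + |R y - Q y| := by rw [abs_sub_comm]
    have hV0 : 0 ≤ V := Finset.sum_nonneg fun y _ => abs_nonneg _
    have hts0 : 0 ≤ t + s := le_trans hV0 htri
    have hsq : V^2 ≤ (t+s)^2 := by nlinarith
    have hmid : α * (1-α) * (t+s)^2 / 2 ≤ - Real.log f := by
      rw [← hid]
      have h1 : α * (t^2/2) ≤ α * (∑ y, R y * Real.log (R y / W y)) :=
        mul_le_mul_of_nonneg_left hp1 hα0.le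
      have h2 : (1-α) * (s^2/2) ≤ (1-α) * (∑ y, R y * Real.log (R y / Q y)) :=
        mul_le_mul_of_nonneg_left hp2 h1α.le
      nlinarith [sq_nonneg (α*t - (1-α)*s)]
    have hrd : renyiDiv α W Q = (- Real.log f) / (1 - α) := by
      rw [renyiDiv, if_neg hlt.ne, ← hf_def, inv_mul_eq_div, ← neg_div_neg_eq, neg_sub]
    rw [hrd, ge_iff_le, le_div_iff₀ h1α]
    calc α / 2 * V ^ 2 * (1 - α) ≤ α / 2 * (t+s)^2 * (1-α) :=
        mul_le_mul_of_nonneg_right (mul_le_mul_of_nonneg_left hsq (by linarith)) h1α.le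
      _ = α * (1-α) * (t+s)^2 / 2 := by ring
      _ ≤ - Real.log f := hmid
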